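/- Define P(1) = p, P(2) = pq + pq², and P(n) = p^{n−1} q^n C_{n−2} for n ≥ 3, where p + q = 1, 0 < q < 1/2, and C_n is the n-th Catalan number. Then ∑_{n≥1} P(n) = 1. -/

import Mathlib

noncomputable def smCycleProb (p q : ℝ) (n : ℕ) : ℝ :=
  if n = 1 then p
  else if n = 2 then p * q + p * q ^ 2
  else p ^ (n - 1) * q ^ n * (catalan (n - 2) : ℝ)

open Finset

/-- Partial sums of the Catalan generating function at `x = p*q` are bounded by `1/p`. -/
lemma catalan_partial_sum_le (p q : ℝ) (hpq : p + q = 1) (hp0 : 0 < p) (hq0 : 0 ≤ q) :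
    ∀ N : ℕ, ∑ m ∈ range N, (catalan m : ℝ) * (p * q) ^ m ≤ 1 / p := by
  set x : ℝ := p * q with hx
  have hx0 : 0 ≤ x := mul_nonneg hp0.le hq0
  set f : ℕ → ℝ := fun m => (catalan m : ℝ) * x ^ m with hf
  have hfnn : ∀ m, 0 ≤ f m := fun m => mul_nonneg (Nat.cast_nonneg _) (pow_nonneg hx0 _)
  intro N
  induction N with
  | zero => simp; positivity
  | succ N ih =>
      have hTnn : 0 ≤ ∑ m ∈ range N, f m := Finset.sum_nonneg fun m _ => hfnn m
      -- peel off the first term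
      rw [Finset.sum_range_succ']
      have h0 : (catalan 0 : ℝ) * x ^ 0 = 1 := by simp
      have hstep : ∀ m : ℕ, (catalan (m + 1) : ℝ) * x ^ (m + 1)
          = x * ∑ i ∈ range (m + 1), f i * f (m - i) := by
        intro m
        rw [catalan_succ, ← Finset.sum_range fun i => catalan i * catalan (m - i)]
        push_cast
        rw [Finset.sum_mul, Finset.mul_sum]
        refine Finset.sum_congr rfl fun i hi => ?_
        have him : i ≤ m := Nat.lt_succ_iff.mp (Finset.mem_range.mp hi)
        have : x ^ (m + 1) = x * (x ^ i * x ^ (m - i)) := by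
          rw [← pow_add, ← pow_succ']
          congr 1
          omega
        rw [this, hf]
        ring
      simp only [hstep, h0]
      rw [← Finset.mul_sum]
      -- bound the double sum by the square of the partial sum
      have hdouble : ∑ m ∈ range N, ∑ i ∈ range (m + 1), f i * f (m - i)
          ≤ (∑ m ∈ range N, f m) * (∑ m ∈ range N, f m) := by
        have hswap : ∑ m ∈ range N, ∑ i ∈ range (m + 1), f i * f (m - i)
            = ∑ i ∈ range N, ∑ m ∈ Finset.Ico i N, f i * f (m - i) := by
          simpa only [Finset.range_eq_Ico] using
            (Finset.sum_Ico_Ico_comm 0 N (fun i m => f i * f (m - i))).symm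
        rw [hswap, Finset.sum_mul]
        refine Finset.sum_le_sum fun i hi => ?_
        rw [← Finset.mul_sum]
        refine mul_le_mul_of_nonneg_left ?_ (hfnn i)
        have : ∑ m ∈ Finset.Ico i N, f (m - i) = ∑ j ∈ range (N - i), f j := by
          rw [Finset.sum_Ico_eq_sum_range]
          exact Finset.sum_congr rfl fun j _ => by congr 1; omega
        rw [this]
        exact Finset.sum_le_sum_of_subset_of_nonneg
          (Finset.range_subset_range.mpr (Nat.sub_le _ _)) (fun m _ _ => hfnn m)
      have hq1 : p * (1 / p) = 1 := mul_one_div_cancel hp0.ne'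
      calc x * (∑ m ∈ range N, ∑ i ∈ range (m + 1), f i * f (m - i)) + 1
          ≤ x * ((1 / p) * (1 / p)) + 1 := by
            refine add_le_add_left ?_ 1
            refine mul_le_mul_of_nonneg_left ?_ hx0
            exact hdouble.trans (mul_le_mul ih ih hTnn (by positivity))
        _ = 1 / p := by
            have hq' : q = 1 - p := by linarith
            rw [hx, hq']
            field_simp
            ring_nf

theorem smCycleProb_sum_one (p q : ℝ) (hpq : p + q = 1)
    (hq0 : 0 < q) (hq : q < 1/2) :
    HasSum (fun n : ℕ => smCycleProb p q (n + 1)) 1 := by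
  have hp1 : p = 1 - q := by linarith
  have hp0 : 0 < p := by rw [hp1]; linarith
  have hqp : q < p := by rw [hp1]; linarith
  set x : ℝ := p * q with hx
  have hx0 : 0 ≤ x := by positivity
  set f : ℕ → ℝ := fun m => (catalan m : ℝ) * x ^ m with hf
  have hfnn : ∀ m, 0 ≤ f m := fun m => mul_nonneg (Nat.cast_nonneg _) (pow_nonneg hx0 _)
  have hbound := catalan_partial_sum_le p q hpq hp0 hq0.le
  have hsum : Summable f := summable_of_sum_range_le hfnn hbound
  have hS_le : ∑' m, f m ≤ 1 / p := Real.tsum_le_of_sum_range_le hfnn hbound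
  set S : ℝ := ∑' m, f m with hS
  have hnorm : Summable fun m => ‖f m‖ := by
    simpa [Real.norm_eq_abs, abs_of_nonneg (hfnn _)] using hsum
  have hcauchy : S * S = ∑' n, ∑ k ∈ range (n + 1), f k * f (n - k) :=
    tsum_mul_tsum_eq_tsum_sum_range_of_summable_norm hnorm hnorm
  have hinner : ∀ n : ℕ, ∑ k ∈ range (n + 1), f k * f (n - k)
      = (catalan (n + 1) : ℝ) * x ^ n := by
    intro n
    rw [catalan_succ, ← Finset.sum_range fun i => catalan i * catalan (n - i)]
    push_cast
    rw [Finset.sum_mul]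
    refine Finset.sum_congr rfl fun k hk => ?_
    have hkn : k ≤ n := Nat.lt_succ_iff.mp (Finset.mem_range.mp hk)
    have hxx : x ^ k * x ^ (n - k) = x ^ n := by
      rw [← pow_add]; congr 1; omega
    rw [hf]
    dsimp only
    rw [show (catalan k : ℝ) * x ^ k * ((catalan (n - k) : ℝ) * x ^ (n - k))
        = (catalan k : ℝ) * (catalan (n - k) : ℝ) * (x ^ k * x ^ (n - k)) by ring, hxx]
  have hshift : HasSum (fun n => f (n + 1)) (S - 1) := by
    apply (hasSum_nat_add_iff 1).2
    have : S - 1 + ∑ i ∈ range 1, f i = S := by simp [hf]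
    rw [this]
    exact hsum.hasSum
  have h1 : HasSum (fun n => x * ((catalan (n + 1) : ℝ) * x ^ n)) (S - 1) := by
    refine hshift.congr_fun fun n => ?_
    rw [hf]
    dsimp only
    rw [pow_succ]
    ring
  have hquad : x * (S * S) = S - 1 := by
    rw [hcauchy, tsum_congr hinner, ← tsum_mul_left]
    exact h1.tsum_eq
  have hfac : (p * S - 1) * (q * S - 1) = 0 := by
    have hexp : (p * S - 1) * (q * S - 1) = x * (S * S) - (p + q) * S + 1 := by
      rw [hx]; ring
    rw [hexp, hquad, hpq]; ring
  have hSp : S = 1 / p := by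
    have hq2 : q * S - 1 < 0 := by
      have h3 : q * S ≤ q * (1 / p) := mul_le_mul_of_nonneg_left hS_le hq0.le
      have h4 : q * (1 / p) < 1 := by
        rw [mul_one_div]
        exact (div_lt_one hp0).2 hqp
      linarith
    rcases mul_eq_zero.mp hfac with h | h
    · field_simp
      linarith
    · exact absurd h hq2.ne
  have hHasf : HasSum f (1 / p) := hSp ▸ hsum.hasSum
  have hshift2 : HasSum (fun m => f (m + 1)) (1 / p - 1) := by
    apply (hasSum_nat_add_iff 1).2
    have : 1 / p - 1 + ∑ i ∈ range 1, f i = 1 / p := by simp [hf]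
    rw [this]
    exact hHasf
  have hscaled : HasSum (fun m => p * q ^ 2 * f (m + 1)) (p * q ^ 2 * (1 / p - 1)) :=
    hshift2.mul_left _
  have hval1 : p * q ^ 2 * (1 / p - 1) = q ^ 3 := by
    have hpp : p * (1 / p) = 1 := mul_one_div_cancel hp0.ne'
    calc p * q ^ 2 * (1 / p - 1) = q ^ 2 * (p * (1 / p)) - p * q ^ 2 := by ring
      _ = q ^ 2 - p * q ^ 2 := by rw [hpp]; ring
      _ = q ^ 3 := by rw [hp1]; ring
  have hfinal : HasSum (fun n : ℕ => smCycleProb p q (n + 2 + 1)) (q ^ 3) := by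
    rw [← hval1]
    refine hscaled.congr_fun fun m => ?_
    have h2 : m + 2 + 1 = m + 3 := by omega
    rw [h2]
    have h3 : smCycleProb p q (m + 3) = p ^ (m + 2) * q ^ (m + 3) * (catalan (m + 1) : ℝ) := by
      unfold smCycleProb
      rw [if_neg (by omega : ¬ m + 3 = 1), if_neg (by omega : ¬ m + 3 = 2),
        show m + 3 - 1 = m + 2 by omega, show m + 3 - 2 = m + 1 by omega]
    rw [h3, hf, hx]
    dsimp only
    rw [mul_pow]
    ring
  have hmain := (hasSum_nat_add_iff (f := fun n : ℕ => smCycleProb p q (n + 1)) 2).1 hfinal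
  have hval2 : q ^ 3 + ∑ i ∈ range 2, smCycleProb p q (i + 1) = 1 := by
    rw [Finset.sum_range_succ, Finset.sum_range_one]
    have e1 : smCycleProb p q 1 = p := by simp [smCycleProb]
    have e2 : smCycleProb p q 2 = p * q + p * q ^ 2 := by simp [smCycleProb]
    rw [e1, e2, hp1]
    ring
  rwa [hval2] at hmain
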